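/- Let r ≥ 3 and k ≥ 2 with r ≤ k+1, and let γ : [n]^{(k-1)} → {red, green} be any 2-colouring. Define the k-uniform hypergraph H_r(γ) on [n] whose edges are those k-sets {x₁ < … < x_k} satisfying γ(x∖{x₁}) ≠ γ(x∖{x₂}) ≠ … ≠ γ(x∖{x_{k+3-r}}) (consecutive colours alternate along the first k+3-r links). Then H_r(γ) contains no copy of F_r^{(k)}, the k-uniform hypergraph with k+1 vertices and r edges. -/

import Mathlib

lemma aux_sort_erase (S : Finset ℕ) {t : ℕ} (ht : t < (S.sort (· ≤ ·)).length) :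
    (S.erase ((S.sort (· ≤ ·)).getD t 0)).sort (· ≤ ·) = (S.sort (· ≤ ·)).eraseIdx t := by
  set L := S.sort (· ≤ ·) with hL
  have hv : L.getD t 0 = L[t] := by
    rw [List.getD_eq_getElem?_getD, List.getElem?_eq_getElem ht]; rfl
  rw [hv]
  have hnd : L.Nodup := S.sort_nodup _
  rw [← hnd.erase_getElem t ht]
  apply List.Perm.eq_of_pairwise' (r := (· ≤ · : ℕ → ℕ → Prop))
  rotate_left 2
  · -- permutation via multisets
    rw [← Multiset.coe_eq_coe]
    have h1 : ((S.erase L[t]).sort (· ≤ ·) : Multiset ℕ) = (S.erase L[t]).1 :=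
      Finset.sort_eq _ _
    have h2 : (S.erase L[t]).1 = S.1.erase L[t] := Finset.erase_val _ _
    have h3 : (L.erase L[t] : Multiset ℕ) = (L : Multiset ℕ).erase L[t] :=
      (Multiset.coe_erase _ _).symm
    have h4 : (L : Multiset ℕ) = S.1 := Finset.sort_eq _ _
    rw [h1, h2, h3, h4]
  · exact Finset.pairwise_sort _ _
  · exact List.Pairwise.sublist List.erase_sublist (Finset.pairwise_sort _ _)

lemma aux_alt (B : ℕ → Bool) (M : ℕ) (h : ∀ i, i + 1 ≤ M → B i ≠ B (i + 1)) :
    ∀ i ≤ M, B i = xor i.bodd (B 0) := by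
  intro i
  induction i with
  | zero => simp
  | succ n ih =>
    intro hn
    have h1 := h n (by omega)
    have h2 := ih (by omega)
    rw [Nat.bodd_succ]
    revert h1 h2
    cases n.bodd <;> cases B 0 <;> cases B n <;> cases B (n + 1) <;> simp

/-- Freeness claim in the proof of Fact 7.2: for `3 ≤ r ≤ k+1` and any 2-colouring `γ`
of `(k-1)`-sets, the `k`-uniform hypergraph `H_r(γ)` — whose edges are the `k`-sets
`{x₁ < … < x_k}` with `γ(x∖{x₁}) ≠ γ(x∖{x₂}) ≠ … ≠ γ(x∖{x_{k+3-r}})` — contains no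
copy of `F_r^{(k)}`, the `k`-uniform hypergraph with `k+1` vertices and `r` edges.
(Here `(e.sort (· ≤ ·)).getD i 0` is the `(i+1)`-st smallest element of `e`.) -/
theorem stmt_18 (k r : ℕ) (hk : 2 ≤ k) (hr : 3 ≤ r) (hrk : r ≤ k + 1)
    (γ : Finset ℕ → Bool) :
    ¬ ∃ S : Finset ℕ, S.card = k + 1 ∧
        ∃ Y : Finset (Finset ℕ), Y ⊆ Finset.powersetCard k S ∧ r ≤ Y.card ∧
          ∀ e ∈ Y, ∀ i : ℕ, i + 1 ≤ k + 2 - r →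
            γ (e.erase ((e.sort (· ≤ ·)).getD i 0)) ≠
              γ (e.erase ((e.sort (· ≤ ·)).getD (i + 1) 0)) := by
  rintro ⟨S, hS, Y, hYsub, hYcard, halt⟩
  set M := k + 2 - r with hM
  set L := S.sort (· ≤ ·) with hLdef
  have hLlen : L.length = k + 1 := by rw [hLdef, Finset.length_sort, hS]
  -- every edge is S minus one vertex, identified by its index in L
  have key : ∀ e ∈ Y, ∃ t, t < k + 1 ∧ e = S.erase (L.getD t 0) := by
    intro e he
    have hp := hYsub he
    rw [Finset.mem_powersetCard] at hp
    obtain ⟨hes, hec⟩ := hp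
    have hcard : (S \ e).card = 1 := by
      rw [Finset.card_sdiff_of_subset hes, hS, hec]; omega
    obtain ⟨v, hv⟩ := Finset.card_eq_one.mp hcard
    have hvS : v ∈ S := by
      have : v ∈ S \ e := hv ▸ Finset.mem_singleton_self v
      exact (Finset.mem_sdiff.mp this).1
    have hvL : v ∈ L := Finset.mem_sort (· ≤ ·) |>.mpr hvS
    obtain ⟨t, ht, hvt⟩ := List.mem_iff_getElem.mp hvL
    refine ⟨t, by omega, ?_⟩
    have hgd : L.getD t 0 = v := by
      rw [List.getD_eq_getElem?_getD, List.getElem?_eq_getElem ht]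
      simpa using hvt
    rw [hgd]
    ext x
    simp only [Finset.mem_erase]
    constructor
    · intro hx
      refine ⟨?_, hes hx⟩
      rintro rfl
      have : x ∈ S \ e := hv ▸ Finset.mem_singleton_self x
      exact (Finset.mem_sdiff.mp this).2 hx
    · rintro ⟨hxv, hxS⟩
      by_contra hxe
      have : x ∈ S \ e := Finset.mem_sdiff.mpr ⟨hxS, hxe⟩
      rw [hv, Finset.mem_singleton] at this
      exact hxv this
  -- choose the index function
  choose idx hidx1 hidx2 using key
  classical
  let idx' : Finset ℕ → ℕ := fun e => if h : e ∈ Y then idx e h else 0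
  have hidx'1 : ∀ e (he : e ∈ Y), idx' e < k + 1 := by
    intro e he; simp only [idx', dif_pos he]; exact hidx1 e he
  have hidx'2 : ∀ e (he : e ∈ Y), e = S.erase (L.getD (idx' e) 0) := by
    intro e he; simp only [idx', dif_pos he]; exact hidx2 e he
  set T := Y.image idx' with hT
  have hTcard : r ≤ T.card := by
    rw [hT, Finset.card_image_of_injOn]
    · exact hYcard
    · intro e he f hf hef
      rw [hidx'2 e he, hidx'2 f hf, hef]
    -- injectivity
  -- membership gives an edge
  have hTmem : ∀ t ∈ T, S.erase (L.getD t 0) ∈ Y := by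
    intro t ht
    rw [hT, Finset.mem_image] at ht
    obtain ⟨e, he, rfl⟩ := ht
    rw [← hidx'2 e he]; exact he
  have hTlt : ∀ t ∈ T, t < k + 1 := by
    intro t ht
    rw [hT, Finset.mem_image] at ht
    obtain ⟨e, he, rfl⟩ := ht
    exact hidx'1 e he
  -- the pair colouring
  set F : ℕ → ℕ → Bool := fun a b => γ ((S.erase (L.getD a 0)).erase (L.getD b 0)) with hF
  have hFsymm : ∀ a b, F a b = F b a := by
    intro a b
    simp only [hF]
    rw [Finset.erase_right_comm]
  -- alternation for each t ∈ T
  set B : ℕ → ℕ → Bool := fun t i => F t (if i < t then i else i + 1) with hB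
  have hBalt : ∀ t ∈ T, ∀ i ≤ M, B t i = xor i.bodd (B t 0) := by
    intro t ht
    apply aux_alt
    intro i hi
    have he := hTmem t ht
    have hlt := hTlt t ht
    have hsort : (S.erase (L.getD t 0)).sort (· ≤ ·) = L.eraseIdx t := by
      apply aux_sort_erase S (t := t)
      rw [Finset.length_sort, hS]
      omega
    have hgd : ∀ j, (L.eraseIdx t).getD j 0 = L.getD (if j < t then j else j + 1) 0 := by
      intro j
      rw [List.getD_eq_getElem?_getD, List.getD_eq_getElem?_getD]
      by_cases hj : j < t
      · rw [List.getElem?_eraseIdx_of_lt hj, if_pos hj]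
      · rw [List.getElem?_eraseIdx_of_ge (by omega), if_neg hj]
    have := halt _ he i (by omega)
    rw [hsort, hgd i, hgd (i + 1)] at this
    exact this
  -- key relation between pairs in T
  have hpair : ∀ a ∈ T, ∀ b ∈ T, a < b → b ≤ M + 1 →
      xor (b - 1).bodd (B a 0) = xor a.bodd (B b 0) := by
    intro a ha b hb hab hbM
    have h1 : F a b = B a (b - 1) := by
      simp only [hB]
      congr 1
      rw [if_neg (by omega)]
      omega
    have h2 : F b a = B b a := by
      simp only [hB]
      rw [if_pos hab]
    have e1 : F a b = xor (b - 1).bodd (B a 0) := by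
      rw [h1]; exact hBalt a ha (b - 1) (by omega)
    have e2 : F b a = xor a.bodd (B b 0) := by
      rw [h2]; exact hBalt b hb a (by omega)
    rw [← e1, ← e2, hFsymm]
  -- find three ordered elements of T bounded by M + 1
  set T' := T.filter (fun x => x ≤ M + 1) with hT'
  have hT'sub : T' ⊆ T := Finset.filter_subset _ _
  have hT'card : 3 ≤ T'.card := by
    have hsplit := Finset.card_filter_add_card_filter_not
      (s := T) (p := fun x => x ≤ M + 1)
    have hbound : (T.filter (fun x => ¬ x ≤ M + 1)).card ≤ r - 3 := by
      have hsub : T.filter (fun x => ¬ x ≤ M + 1) ⊆ Finset.Ioc (M + 1) k := by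
        intro x hx
        rw [Finset.mem_filter] at hx
        rw [Finset.mem_Ioc]
        have := hTlt x hx.1
        constructor <;> omega
      have := Finset.card_le_card hsub
      rw [Nat.card_Ioc] at this
      omega
    rw [hT']
    omega
  -- extract a < b < c in T'
  have hne1 : T'.Nonempty := Finset.card_pos.mp (by omega)
  obtain ⟨a, haT', hamin⟩ : ∃ a ∈ T', ∀ x ∈ T', a ≤ x :=
    ⟨T'.min' hne1, T'.min'_mem hne1, fun x hx => T'.min'_le x hx⟩
  have hT''card : 2 ≤ (T'.erase a).card := by
    rw [Finset.card_erase_of_mem haT']; omega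
  have hne2 : (T'.erase a).Nonempty := Finset.card_pos.mp (by omega)
  obtain ⟨b, hbT'', hbmin⟩ : ∃ b ∈ T'.erase a, ∀ x ∈ T'.erase a, b ≤ x :=
    ⟨(T'.erase a).min' hne2, (T'.erase a).min'_mem hne2,
      fun x hx => (T'.erase a).min'_le x hx⟩
  have hbT' : b ∈ T' := Finset.mem_of_mem_erase hbT''
  have hab : a < b := by
    have h1 : a ≤ b := hamin b hbT'
    have h2 : b ≠ a := Finset.ne_of_mem_erase hbT''
    omega
  have hne3 : ((T'.erase a).erase b).Nonempty := by
    apply Finset.card_pos.mp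
    rw [Finset.card_erase_of_mem hbT'']; omega
  obtain ⟨c, hcT''e⟩ := hne3
  have hcT'' : c ∈ T'.erase a := Finset.mem_of_mem_erase hcT''e
  have hcT' : c ∈ T' := Finset.mem_of_mem_erase hcT''
  have hbc : b < c := by
    have h1 : b ≤ c := hbmin c hcT''
    have h2 : c ≠ b := Finset.ne_of_mem_erase hcT''e
    omega
  have haT : a ∈ T := hT'sub haT'
  have hbT : b ∈ T := hT'sub hbT'
  have hcT : c ∈ T := hT'sub hcT'
  have haM : a ≤ M + 1 := (Finset.mem_filter.mp haT').2
  have hbM : b ≤ M + 1 := (Finset.mem_filter.mp hbT').2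
  have hcM : c ≤ M + 1 := (Finset.mem_filter.mp hcT').2
  -- the three relations
  have e1 := hpair a haT b hbT hab (by omega)
  have e2 := hpair a haT c hcT (by omega) (by omega)
  have e3 := hpair b hbT c hcT hbc (by omega)
  -- rewrite parities of predecessors
  obtain ⟨b', rfl⟩ : ∃ b', b = b' + 1 := ⟨b - 1, by omega⟩
  obtain ⟨c', rfl⟩ : ∃ c', c = c' + 1 := ⟨c - 1, by omega⟩
  simp only [Nat.add_sub_cancel, Nat.bodd_succ] at e1 e2 e3
  revert e1 e2 e3
  cases a.bodd <;> cases b'.bodd <;> cases c'.bodd <;>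
    cases B a 0 <;> cases B (b' + 1) 0 <;> cases B (c' + 1) 0 <;> simp
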